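/- Let 𝒳, 𝒜 be nonempty finite types, α ∈ (0,1) ∪ (1,∞), p_X a strictly positive probability mass function on 𝒳, and p a strictly positive channel from 𝒳 to 𝒜. Let u_X be the uniform distribution on 𝒳. Then the minimum over strictly positive probability mass functions q on 𝒜 of D_α(p_X p ‖ u_X q) − D_α(p_X ‖ u_X) is attained at q*(a) = (Σ_x p_X(x)^α p(a|x)^α)^{1/α} / Σ_{a'} (Σ_x p_X(x)^α p(a'|x)^α)^{1/α}, and the minimum value equals Arimoto's mutual information of order α: I_α^A(p_X, p) = (α/(1−α)) [ log(Σ_x p_X(x)^α)^{1/α} − log Σ_a (Σ_x p_X(x)^α p(a|x)^α)^{1/α} ]. -/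

import Mathlib

open Finset Real

/-- A probability mass function on a finite type. -/
def IsPMF {Z : Type*} [Fintype Z] (p : Z → ℝ) : Prop :=
  (∀ z, 0 ≤ p z) ∧ ∑ z, p z = 1

/-- A channel from `X` to `A`: a family of pmfs on `A` indexed by `X`. -/
def IsChannel {X A : Type*} [Fintype X] [Fintype A] (W : X → A → ℝ) : Prop :=
  ∀ x, IsPMF (W x)

/-- Expected loss `Σ_{x,a} p_X(x) p_{A|X}(a|x) ℓ(x,a)`. -/
noncomputable def expLoss {X A : Type*} [Fintype X] [Fintype A]
    (pX : X → ℝ) (ℓ : X → A → ℝ) (W : X → A → ℝ) : ℝ :=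
  ∑ x, ∑ a, pX x * W x a * ℓ x a

lemma holder_aux {ι : Type*} [Fintype ι] [Nonempty ι] {β : ℝ} (hβ0 : 0 < β) (hβ1 : β < 1)
    (u v : ι → ℝ) (hu : ∀ i, 0 < u i) (hv : ∀ i, 0 < v i) :
    ∑ i, u i ^ β * v i ^ (1 - β) ≤ (∑ i, u i) ^ β * (∑ i, v i) ^ (1 - β) := by
  set U := ∑ i, u i with hU
  set V := ∑ i, v i with hV
  have hUpos : 0 < U := Finset.sum_pos (fun i _ => hu i) Finset.univ_nonempty
  have hVpos : 0 < V := Finset.sum_pos (fun i _ => hv i) Finset.univ_nonempty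
  have hUV : 0 < U ^ β * V ^ (1 - β) :=
    mul_pos (Real.rpow_pos_of_pos hUpos _) (Real.rpow_pos_of_pos hVpos _)
  have key : ∀ i, u i ^ β * v i ^ (1 - β)
      ≤ (β * (u i / U) + (1 - β) * (v i / V)) * (U ^ β * V ^ (1 - β)) := by
    intro i
    have h := Real.geom_mean_le_arith_mean2_weighted (w₁ := β) (w₂ := 1 - β) hβ0.le (by linarith)
      (div_nonneg (hu i).le hUpos.le) (div_nonneg (hv i).le hVpos.le) (by ring)
    have e : (u i / U) ^ β * (v i / V) ^ (1 - β)
        = u i ^ β * v i ^ (1 - β) / (U ^ β * V ^ (1 - β)) := by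
      rw [Real.div_rpow (hu i).le hUpos.le, Real.div_rpow (hv i).le hVpos.le]
      ring
    rw [e, div_le_iff₀ hUV] at h
    exact h
  calc ∑ i, u i ^ β * v i ^ (1 - β)
      ≤ ∑ i, (β * (u i / U) + (1 - β) * (v i / V)) * (U ^ β * V ^ (1 - β)) :=
        Finset.sum_le_sum (fun i _ => key i)
    _ = (∑ i, (β * (u i / U) + (1 - β) * (v i / V))) * (U ^ β * V ^ (1 - β)) := by
        rw [← Finset.sum_mul]
    _ = U ^ β * V ^ (1 - β) := by
        have h1 : ∑ i, (β * (u i / U) + (1 - β) * (v i / V))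
            = β * (U / U) + (1 - β) * (V / V) := by
          rw [Finset.sum_add_distrib, ← Finset.mul_sum, ← Finset.mul_sum,
            ← Finset.sum_div, ← Finset.sum_div]
        rw [h1, div_self hUpos.ne', div_self hVpos.ne']
        ring

theorem arimoto_identity
    {X A : Type*} [Fintype X] [Fintype A] [Nonempty X] [Nonempty A]
    (α : ℝ) (hα : α ∈ Set.Ioo (0 : ℝ) 1 ∪ Set.Ioi (1 : ℝ))
    (pX : X → ℝ) (hpX : IsPMF pX) (hpXpos : ∀ x, 0 < pX x)
    (p : X → A → ℝ) (hp : IsChannel p) (hppos : ∀ x a, 0 < p x a) :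
    letI uX : X → ℝ := fun _ => 1 / (Fintype.card X : ℝ)
    letI D : (A → ℝ) → ℝ := fun q =>
      (1 / (α - 1)) *
          Real.log (∑ x, ∑ a, (pX x * p x a) ^ α * (uX x * q a) ^ (1 - α))
        - (1 / (α - 1)) * Real.log (∑ x, pX x ^ α * uX x ^ (1 - α))
    letI qstar : A → ℝ := fun a =>
      (∑ x, pX x ^ α * p x a ^ α) ^ (1 / α) /
        ∑ a', (∑ x, pX x ^ α * p x a' ^ α) ^ (1 / α)
    (IsPMF qstar ∧ (∀ a, 0 < qstar a)) ∧
      (∀ q : A → ℝ, IsPMF q → (∀ a, 0 < q a) → D qstar ≤ D q) ∧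
      D qstar = (α / (1 - α)) *
        (Real.log ((∑ x, pX x ^ α) ^ (1 / α))
          - Real.log (∑ a, (∑ x, pX x ^ α * p x a ^ α) ^ (1 / α))) := by
  have hα0 : 0 < α := by
    rcases hα with h | h
    · exact h.1
    · linarith [Set.mem_Ioi.mp h]
  have hαne1 : α ≠ 1 := by
    rcases hα with h | h
    · exact ne_of_lt h.2
    · exact ne_of_gt (Set.mem_Ioi.mp h)
  have hαsub : α - 1 ≠ 0 := sub_ne_zero.mpr hαne1
  set S : A → ℝ := fun a => ∑ x, pX x ^ α * p x a ^ α with hS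
  have hSpos : ∀ a, 0 < S a := fun a =>
    Finset.sum_pos (fun x _ => mul_pos (Real.rpow_pos_of_pos (hpXpos x) _)
      (Real.rpow_pos_of_pos (hppos x a) _)) Finset.univ_nonempty
  set T : ℝ := ∑ a, S a ^ (1 / α) with hT
  have hTpos : 0 < T :=
    Finset.sum_pos (fun a _ => Real.rpow_pos_of_pos (hSpos a) _) Finset.univ_nonempty
  set qs : A → ℝ := fun a => S a ^ (1 / α) / T with hqs
  set Df : (A → ℝ) → ℝ := fun q =>
    (1 / (α - 1)) *
        Real.log (∑ x, ∑ a, (pX x * p x a) ^ α *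
          ((1 / (Fintype.card X : ℝ)) * q a) ^ (1 - α))
      - (1 / (α - 1)) *
        Real.log (∑ x, pX x ^ α * (1 / (Fintype.card X : ℝ)) ^ (1 - α)) with hDf
  have hqspos : ∀ a, 0 < qs a := fun a =>
    div_pos (Real.rpow_pos_of_pos (hSpos a) _) hTpos
  have hPpos : 0 < ∑ x, pX x ^ α :=
    Finset.sum_pos (fun x _ => Real.rpow_pos_of_pos (hpXpos x) _) Finset.univ_nonempty
  have hcard : (0 : ℝ) < (Fintype.card X : ℝ) := by
    exact_mod_cast Fintype.card_pos
  have hc : 0 < (1 : ℝ) / (Fintype.card X : ℝ) := by positivity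
  have hcpow : 0 < ((1 : ℝ) / (Fintype.card X : ℝ)) ^ (1 - α) :=
    Real.rpow_pos_of_pos hc _
  -- qs is a pmf
  have hpmf : IsPMF qs := by
    refine ⟨fun a => (hqspos a).le, ?_⟩
    show ∑ a, S a ^ (1 / α) / T = 1
    rw [← Finset.sum_div, ← hT, div_self hTpos.ne']
  -- D simplification
  have hDeq : ∀ q : A → ℝ, (∀ a, 0 < q a) →
      Df q = (1 / (α - 1)) *
        (Real.log (∑ a, S a * q a ^ (1 - α)) - Real.log (∑ x, pX x ^ α)) := by
    intro q hq
    have hLpos : 0 < ∑ a, S a * q a ^ (1 - α) :=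
      Finset.sum_pos (fun a _ => mul_pos (hSpos a)
        (Real.rpow_pos_of_pos (hq a) _)) Finset.univ_nonempty
    have hsum1 : ∑ x, ∑ a, (pX x * p x a) ^ α *
          ((1 / (Fintype.card X : ℝ)) * q a) ^ (1 - α)
        = (1 / (Fintype.card X : ℝ)) ^ (1 - α) * ∑ a, S a * q a ^ (1 - α) := by
      rw [Finset.sum_comm]
      have e : ∀ a, ∑ x, (pX x * p x a) ^ α *
            ((1 / (Fintype.card X : ℝ)) * q a) ^ (1 - α)
          = (1 / (Fintype.card X : ℝ)) ^ (1 - α) * (S a * q a ^ (1 - α)) := by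
        intro a
        have e1 : ∀ x, (pX x * p x a) ^ α *
              ((1 / (Fintype.card X : ℝ)) * q a) ^ (1 - α)
            = (pX x ^ α * p x a ^ α) *
              ((1 / (Fintype.card X : ℝ)) ^ (1 - α) * q a ^ (1 - α)) := by
          intro x
          rw [Real.mul_rpow (hpXpos x).le (hppos x a).le,
            Real.mul_rpow hc.le (hq a).le]
        simp_rw [e1]
        rw [← Finset.sum_mul, hS]
        ring
      simp_rw [e]
      rw [← Finset.mul_sum]
    have hsum2 : ∑ x, pX x ^ α * (1 / (Fintype.card X : ℝ)) ^ (1 - α)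
        = (1 / (Fintype.card X : ℝ)) ^ (1 - α) * ∑ x, pX x ^ α := by
      rw [← Finset.sum_mul]
      ring
    show (1 / (α - 1)) *
        Real.log (∑ x, ∑ a, (pX x * p x a) ^ α *
          ((1 / (Fintype.card X : ℝ)) * q a) ^ (1 - α))
      - (1 / (α - 1)) *
        Real.log (∑ x, pX x ^ α * (1 / (Fintype.card X : ℝ)) ^ (1 - α)) = _
    rw [hsum1, hsum2, Real.log_mul hcpow.ne' hLpos.ne', Real.log_mul hcpow.ne' hPpos.ne']
    ring
  -- value at qs
  have hLstar : ∑ a, S a * qs a ^ (1 - α) = T ^ α := by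
    have e : ∀ a, S a * qs a ^ (1 - α) = S a ^ (1 / α) * T ^ (α - 1) := by
      intro a
      show S a * (S a ^ (1 / α) / T) ^ (1 - α) = _
      rw [Real.div_rpow (Real.rpow_nonneg (hSpos a).le _) hTpos.le,
        ← Real.rpow_mul (hSpos a).le]
      have h1 : 1 + 1 / α * (1 - α) = 1 / α := by field_simp; ring
      have h2 : S a * S a ^ (1 / α * (1 - α)) = S a ^ (1 / α) := by
        nth_rewrite 1 [← Real.rpow_one (S a)]
        rw [← Real.rpow_add (hSpos a), h1]
      have h3 : T ^ (α - 1) = (T ^ (1 - α))⁻¹ := by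
        rw [← Real.rpow_neg hTpos.le]
        norm_num
      rw [mul_div_assoc', h2, h3, div_eq_mul_inv]
    simp_rw [e]
    rw [← Finset.sum_mul, ← hT]
    nth_rewrite 1 [← Real.rpow_one T]
    rw [← Real.rpow_add hTpos]
    norm_num
  have hval : Df qs = (α / (1 - α)) *
      (Real.log ((∑ x, pX x ^ α) ^ (1 / α)) - Real.log T) := by
    have hα0' : α ≠ 0 := hα0.ne'
    have h1mα : (1 : ℝ) - α ≠ 0 := fun h => hαne1 (by linarith)
    rw [hDeq qs hqspos, hLstar, Real.log_rpow hTpos, Real.log_rpow hPpos]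
    field_simp
    ring
  -- minimality
  have hmin : ∀ q : A → ℝ, IsPMF q → (∀ a, 0 < q a) → Df qs ≤ Df q := by
    intro q hqpmf hq
    have hLpos : 0 < ∑ a, S a * q a ^ (1 - α) :=
      Finset.sum_pos (fun a _ => mul_pos (hSpos a)
        (Real.rpow_pos_of_pos (hq a) _)) Finset.univ_nonempty
    rw [hDeq q hq, hDeq qs hqspos, hLstar]
    have key : (1 / (α - 1)) * Real.log (T ^ α)
        ≤ (1 / (α - 1)) * Real.log (∑ a, S a * q a ^ (1 - α)) := by
      rcases hα with hio | hgt
      · -- 0 < α < 1 : sum ≤ T^α, coefficient negative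
        have hhold := holder_aux hα0 hio.2 (fun a => S a ^ (1 / α)) q
          (fun a => Real.rpow_pos_of_pos (hSpos a) _) hq
        rw [hqpmf.2, ← hT] at hhold
        have e : ∀ a, (S a ^ (1 / α)) ^ α * q a ^ (1 - α) = S a * q a ^ (1 - α) := by
          intro a
          rw [← Real.rpow_mul (hSpos a).le, one_div, inv_mul_cancel₀ hα0.ne',
            Real.rpow_one]
        simp_rw [e] at hhold
        rw [Real.one_rpow, mul_one] at hhold
        have hlog := Real.log_le_log hLpos hhold
        have hcoef : (1 / (α - 1)) ≤ 0 := by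
          apply div_nonpos_of_nonneg_of_nonpos <;> linarith [hio.2]
        nlinarith [hlog, hcoef]
      · -- α > 1
        have h1α : 1 / α < 1 := by
          rw [div_lt_one hα0]
          exact Set.mem_Ioi.mp hgt
        have h1α0 : 0 < 1 / α := by positivity
        have hhold := holder_aux h1α0 h1α (fun a => S a * q a ^ (1 - α)) q
          (fun a => mul_pos (hSpos a) (Real.rpow_pos_of_pos (hq a) _)) hq
        rw [hqpmf.2, Real.one_rpow, mul_one] at hhold
        have e : ∀ a, (S a * q a ^ (1 - α)) ^ (1 / α) * q a ^ (1 - 1 / α)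
            = S a ^ (1 / α) := by
          intro a
          rw [Real.mul_rpow (hSpos a).le (Real.rpow_nonneg (hq a).le _),
            ← Real.rpow_mul (hq a).le, mul_assoc, ← Real.rpow_add (hq a)]
          have h0 : (1 - α) * (1 / α) + (1 - 1 / α) = 0 := by field_simp; ring
          rw [h0, Real.rpow_zero, mul_one]
        simp_rw [e] at hhold
        rw [← hT] at hhold
        have hTα : T ^ α ≤ ∑ a, S a * q a ^ (1 - α) := by
          have := Real.rpow_le_rpow hTpos.le hhold hα0.le
          rwa [← Real.rpow_mul hLpos.le, one_div, inv_mul_cancel₀ hα0.ne',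
            Real.rpow_one] at this
        have hlog := Real.log_le_log (Real.rpow_pos_of_pos hTpos _) hTα
        have hcoef : (0 : ℝ) ≤ 1 / (α - 1) := by
          apply div_nonneg <;> linarith [Set.mem_Ioi.mp hgt]
        nlinarith [hlog, hcoef]
    linarith [key]
  exact ⟨⟨hpmf, hqspos⟩, hmin, by rw [hval]⟩
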